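/- Let E be a row-finite directed graph with no sources and let A be a collection of saturated hereditary subsets of E⁰. Then ⋁_{H∈A} H = { v ∈ E⁰ : there exists n ∈ ℕ such that s(vEⁿ) ⊆ ⋃_{H∈A} H }, where vEⁿ denotes the set of finite paths of length n with range v and s(vEⁿ) the set of their sources. -/

import Mathlib

noncomputable section

/-- A directed graph with vertex set `V`, edge set `E`, range map `r` and source map `s`. -/
structure DGraph (V E : Type) where
  r : E → V
  s : E → V

namespace DGraph

variable {V E : Type} (G : DGraph V E)

/-- `E` is row-finite: `vE¹ = {e : r(e) = v}` is finite for every vertex `v`. -/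
def RowFinite : Prop := ∀ v : V, {e : E | G.r e = v}.Finite

/-- `E` has no sources: `vE¹` is nonempty for every vertex `v`. -/
def NoSources : Prop := ∀ v : V, {e : E | G.r e = v}.Nonempty

/-- A finite path in `G`: a list of edges `e₁ ⋯ eₙ` with `s(eᵢ) = r(eᵢ₊₁)`, together with
a base vertex which equals the source `s(eₙ)` of the last edge (for the empty path, the
path is just the vertex `base`). -/
structure Path (G : DGraph V E) where
  base : V
  edges : List E
  chain : edges.Chain' (fun e f => G.s e = G.r f)
  last_src : ∀ e ∈ edges.getLast?, G.s e = base

/-- The source vertex of a finite path. -/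
def Path.src {G : DGraph V E} (p : Path G) : V := p.base

/-- The range vertex of a finite path. -/
def Path.rng {G : DGraph V E} (p : Path G) : V :=
  (p.edges.head?.map G.r).getD p.base

/-- A return path based at `v`: a finite path of positive length with range and source `v`
which visits `v` only as its range and source. -/
def IsReturnPath (v : V) (p : Path G) : Prop :=
  p.edges ≠ [] ∧ p.rng = v ∧ p.src = v ∧ ∀ e ∈ p.edges.dropLast, G.s e ≠ v

/-- Condition (K): every vertex is the base of no return path or of at least two distinct
return paths. -/
def CondK : Prop :=
  ∀ v : V, (∀ p : Path G, ¬ G.IsReturnPath v p) ∨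
    ∃ p q : Path G, p ≠ q ∧ G.IsReturnPath v p ∧ G.IsReturnPath v q

/-- A subset `H ⊆ E⁰` is hereditary and saturated. -/
def SatHereditary (H : Set V) : Prop :=
  (∀ e : E, G.r e ∈ H → G.s e ∈ H) ∧
  (∀ v : V, (∀ e : E, G.r e = v → G.s e ∈ H) → v ∈ H)

/-- The smallest saturated hereditary subset of `E⁰` containing every member of `A`. -/
def satHerClosure (A : Set (Set V)) : Set V :=
  ⋂₀ {H : Set V | G.SatHereditary H ∧ ∀ K ∈ A, K ⊆ H}

lemma satHerClosure_satHereditary (A : Set (Set V)) :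
    G.SatHereditary (G.satHerClosure A) := by
  constructor
  · intro e he
    exact Set.mem_sInter.mpr fun H hH => hH.1.1 e (Set.mem_sInter.mp he H hH)
  · intro v hv
    exact Set.mem_sInter.mpr fun H hH =>
      hH.1.2 v (fun e hre => Set.mem_sInter.mp (hv e hre) H hH)


/-- The trivial path at a vertex. -/
def Path.nil (G : DGraph V E) (v : V) : Path G :=
  ⟨v, [], List.isChain_nil, by simp⟩

@[simp] lemma Path.nil_rng (v : V) : (Path.nil G v).rng = v := rfl
@[simp] lemma Path.nil_src (v : V) : (Path.nil G v).src = v := rfl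

/-- Prepend an edge to a path at its range. -/
def Path.cons {G : DGraph V E} (e : E) (p : Path G) (h : G.s e = p.rng) : Path G where
  base := p.base
  edges := e :: p.edges
  chain := by
    show List.IsChain _ (e :: p.edges)
    rw [List.isChain_cons]
    refine ⟨?_, p.chain⟩
    intro b hb
    rw [h]
    unfold Path.rng
    rw [hb]
    rfl
  last_src := by
    intro f hf
    cases hl : p.edges with
    | nil =>
      rw [hl] at hf
      simp at hf
      subst hf
      rw [h]
      unfold Path.rng
      rw [hl]
      rfl
    | cons a t =>
      apply p.last_src
      rw [hl] at hf ⊢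
      rwa [List.getLast?_cons_cons] at hf

@[simp] lemma Path.cons_rng {G : DGraph V E} (e : E) (p : Path G) (h : G.s e = p.rng) :
    (Path.cons e p h).rng = G.r e := rfl

@[simp] lemma Path.cons_src {G : DGraph V E} (e : E) (p : Path G) (h : G.s e = p.rng) :
    (Path.cons e p h).src = p.src := rfl

/-- The tail of a path. -/
def Path.tail {G : DGraph V E} (p : Path G) : Path G where
  base := p.base
  edges := p.edges.tail
  chain := p.chain.tail
  last_src := by
    intro f hf
    apply p.last_src
    cases hl : p.edges with
    | nil => rw [hl] at hf; simp at hf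
    | cons a t =>
      rw [hl] at hf
      cases t with
      | nil => simp at hf
      | cons b u => rw [List.getLast?_cons_cons]; exact hf

lemma Path.tail_rng {G : DGraph V E} (p : Path G) (e : E) (rest : List E)
    (hl : p.edges = e :: rest) : p.tail.rng = G.s e := by
  unfold Path.tail Path.rng
  simp only [hl, List.tail_cons]
  cases rest with
  | nil =>
    simp only [List.head?_nil, Option.map_none, Option.getD_none]
    have := p.last_src e (by rw [hl]; rfl)
    exact this.symm
  | cons f u =>
    simp only [List.head?_cons, Option.map_some, Option.getD_some]
    have := p.chain
    rw [hl] at this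
    exact (List.isChain_cons_cons.mp this).1.symm

@[simp] lemma Path.tail_src {G : DGraph V E} (p : Path G) : p.tail.src = p.src := rfl

section Witness


/-- `W n v` : every path of length `n` with range `v` has source in `⋃₀ A`. -/
def W (A : Set (Set V)) (n : ℕ) (v : V) : Prop :=
  ∀ p : Path G, p.edges.length = n → p.rng = v → p.src ∈ ⋃₀ A

lemma w_zero (A : Set (Set V)) {v : V} : W G A 0 v ↔ v ∈ ⋃₀ A := by
  constructor
  · intro h
    exact h (Path.nil G v) rfl rfl
  · intro h p hlen hrng
    have : p.edges = [] := List.length_eq_zero_iff.mp hlen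
    have hb : p.rng = p.src := by
      unfold Path.rng Path.src
      rw [this]
      rfl
    rw [← hb]
    rw [← hrng] at h
    exact h

lemma w_succ (A : Set (Set V)) {n : ℕ} {v : V} :
    W G A (n + 1) v ↔ ∀ e : E, G.r e = v → W G A n (G.s e) := by
  constructor
  · intro h e he p hlen hrng
    have := h (Path.cons e p hrng.symm) (by simp [Path.cons, hlen]) (by simp [he])
    simpa using this
  · intro h p hlen hrng
    cases hl : p.edges with
    | nil => rw [hl] at hlen; simp at hlen
    | cons e rest =>
      have hre : G.r e = v := by
        rw [← hrng]
        unfold Path.rng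
        rw [hl]
        rfl
      have htl : p.tail.edges.length = n := by
        simp [Path.tail, hl] at hlen ⊢
        omega
      have := h e hre p.tail htl (Path.tail_rng p e rest hl)
      simpa using this

lemma w_mono (A : Set (Set V)) (hA : ∀ H ∈ A, G.SatHereditary H) :
    ∀ n (v : V), W G A n v → W G A (n + 1) v := by
  intro n
  induction n with
  | zero =>
    intro v hv
    rw [w_succ]
    intro e he
    rw [w_zero] at hv ⊢
    obtain ⟨K, hK, hvK⟩ := hv
    exact ⟨K, hK, (hA K hK).1 e (he ▸ hvK)⟩
  | succ n ih =>
    intro v hv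
    rw [w_succ] at hv ⊢
    intro e he
    exact ih _ (hv e he)

lemma w_mono' (A : Set (Set V)) (hA : ∀ H ∈ A, G.SatHereditary H) {m n : ℕ} (hmn : m ≤ n) {v : V}
    (h : W G A m v) : W G A n v := by
  induction n with
  | zero => exact (Nat.le_zero.mp hmn) ▸ h
  | succ n ih =>
    rcases Nat.lt_or_ge m (n + 1) with hlt | hge
    · exact w_mono G A hA n v (ih (Nat.lt_succ_iff.mp hlt))
    · exact (Nat.le_antisymm hmn hge) ▸ h

end Witness

/-- for a row-finite graph `E` with no sources and a collection `A` of
saturated hereditary subsets of `E⁰`, the smallest saturated hereditary set containing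
every member of `A` is `{ v ∈ E⁰ : ∃ n, s(vEⁿ) ⊆ ⋃ A }`, where `vEⁿ` is the set of finite
paths of length `n` with range `v`. -/
theorem satHerClosure_eq (G : DGraph V E) (hfin : G.RowFinite) (hns : G.NoSources)
    (A : Set (Set V)) (hA : ∀ H ∈ A, G.SatHereditary H) :
    G.satHerClosure A =
      {v : V | ∃ n : ℕ, ∀ p : Path G,
        p.edges.length = n → p.rng = v → p.src ∈ ⋃₀ A} := by
  have key : ∀ n (v : V), W G A n v → v ∈ G.satHerClosure A := by
    intro n
    induction n with
    | zero =>
      intro v hv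
      obtain ⟨K, hK, hvK⟩ := (w_zero G A).mp hv
      exact Set.mem_sInter.mpr fun H hH => hH.2 K hK hvK
    | succ n ih =>
      intro v hv
      rw [w_succ] at hv
      exact (G.satHerClosure_satHereditary A).2 v fun e he => ih _ (hv e he)
  apply Set.Subset.antisymm
  · apply Set.sInter_subset_of_mem
    refine ⟨⟨?_, ?_⟩, ?_⟩
    · -- hereditary
      rintro e ⟨n, hn⟩
      refine ⟨n, ?_⟩
      have : W G A (n + 1) (G.r e) := w_mono G A hA n _ hn
      exact (w_succ G A).mp this e rfl
    · -- saturated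
      intro v hv
      classical
      have hfv := hfin v
      set f : E → ℕ := fun e => if h : G.r e = v then (hv e h).choose else 0 with hf
      set N := hfv.toFinset.sup f with hN
      refine ⟨N + 1, (w_succ G A).mpr ?_⟩
      intro e he
      have hWe : W G A (f e) (G.s e) := by
        simp only [hf, he, dif_pos]
        exact (hv e he).choose_spec
      have hle : f e ≤ N := Finset.le_sup (by simp [Set.Finite.mem_toFinset, he])
      exact w_mono' G A hA hle hWe
    · -- contains every K ∈ A
      intro K hK v hvK
      exact ⟨0, (w_zero G A).mpr ⟨K, hK, hvK⟩⟩
  · rintro v ⟨n, hn⟩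
    exact key n v hn

end DGraph
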